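/- Let X_1, …, X_n (n ≥ 2) be mutually independent random variables where each X_i is Pareto distributed with shape parameter α_i ∈ (0,1] and scale parameter ρ_i > 0, that is, P(X_i > x) = (ρ_i/x)^{α_i} for x ≥ ρ_i and P(X_i > x) = 1 for x < ρ_i. Then for every weight vector θ = (θ_1, …, θ_n) ∈ Δ_n and every x ≥ 0, P(θ_1 X_1 + ⋯ + θ_n X_n > x) ≥ θ_1 P(X_1 > x) + ⋯ + θ_n P(X_n > x); equivalently, the Categorical(θ) mixture I_1 X_1 + ⋯ + I_n X_n (with I independent of the X_i) satisfies I_1 X_1 + ⋯ + I_n X_n ≤_st θ_1 X_1 + ⋯ + θ_n X_n. -/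

import Mathlib

open MeasureTheory ProbabilityTheory

open Finset

private lemma amgm2 {A B a : ℝ} (hA : 0 ≤ A) (hB : 0 ≤ B) (ha0 : 0 ≤ a) (ha1 : a ≤ 1) :
    A ^ (1 - a) * B ^ a ≤ (1 - a) * A + a * B :=
  Real.geom_mean_le_arith_mean2_weighted (by linarith) ha0 hA hB (by ring)

private lemma tele {n : ℕ} (a p q : Fin n → ℝ) (c : Fin n → Fin n → ℝ)
    (hq0 : ∀ i, 0 ≤ q i) (hq1 : ∀ i, q i ≤ 1) (hp0 : ∀ i, 0 ≤ p i)
    (hc : ∀ i j, 0 ≤ c i j) (hcp : ∀ i j, a i ≤ a j → p j ≤ c i j)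
    (hkey : ∀ i, p i ≤ q i * (1 - ∑ j ∈ univ.erase i, c i j)) :
    ∀ s : Finset (Fin n), ∏ i ∈ s, (1 - q i) ≤ 1 - ∑ i ∈ s, p i := by
  classical
  intro s
  induction s using Finset.strongInduction with
  | _ s ih =>
    rcases s.eq_empty_or_nonempty with rfl | hs
    · simp
    · obtain ⟨i, his, hmin⟩ := s.exists_min_image a hs
      have IH := ih _ (Finset.erase_ssubset his)
      rw [← Finset.prod_erase_mul s _ his, ← Finset.sum_erase_add s _ his]
      have hE : ∑ j ∈ s.erase i, p j ≤ ∑ j ∈ univ.erase i, c i j := by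
        calc ∑ j ∈ s.erase i, p j ≤ ∑ j ∈ s.erase i, c i j :=
              Finset.sum_le_sum fun j hj => hcp i j (hmin j (Finset.mem_of_mem_erase hj))
          _ ≤ ∑ j ∈ univ.erase i, c i j :=
              Finset.sum_le_sum_of_subset_of_nonneg
                (Finset.erase_subset_erase i (Finset.subset_univ s))
                (fun j _ _ => hc i j)
      have h1 : p i ≤ q i * (1 - ∑ j ∈ s.erase i, p j) :=
        le_trans (hkey i) (mul_le_mul_of_nonneg_left (by linarith) (hq0 i))
      have hprod0 : (0:ℝ) ≤ 1 - q i := by linarith [hq1 i]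
      calc (∏ j ∈ s.erase i, (1 - q j)) * (1 - q i)
          ≤ (1 - ∑ j ∈ s.erase i, p j) * (1 - q i) :=
            mul_le_mul_of_nonneg_right IH hprod0
        _ ≤ 1 - (∑ j ∈ s.erase i, p j + p i) := by nlinarith [h1]

private lemma key_ineq {n : ℕ} (θ ρ α : Fin n → ℝ)
    (hθ : ∀ i, 0 < θ i) (hρ : ∀ i, 0 < ρ i)
    (hα : ∀ i, α i ∈ Set.Ioc (0:ℝ) 1) (hθsum : ∑ i, θ i = 1)
    (y : ℝ) (hy : 0 ≤ y) (i : Fin n) :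
    θ i * (min 1 (ρ i / (y + ∑ j, θ j * ρ j))) ^ (α i) ≤
      ((θ i * ρ i) / (y + θ i * ρ i)) ^ (α i) *
        (1 - ∑ j ∈ univ.erase i, θ j * (min 1 (ρ j / (y + ∑ k, θ k * ρ k))) ^ (α i)) := by
  classical
  set m := ∑ j, θ j * ρ j with hm
  set x := y + m with hxdef
  have hmpos : 0 < m := Finset.sum_pos (fun j _ => mul_pos (hθ j) (hρ j)) ⟨i, mem_univ i⟩
  have hx : 0 < x := by positivity
  set a := θ i * ρ i with hadef
  have ha : 0 < a := mul_pos (hθ i) (hρ i)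
  have hya : 0 < y + a := by positivity
  set u : Fin n → ℝ := fun j => min 1 (ρ j / x) with hu
  have hu0 : ∀ j, 0 < u j := fun j => lt_min one_pos (div_pos (hρ j) hx)
  have hu1 : ∀ j, u j ≤ 1 := fun j => min_le_left _ _
  have hα0 : 0 < α i := (hα i).1
  have hα1 : α i ≤ 1 := (hα i).2
  set b := a / (y + a) with hb
  have hb0 : 0 < b := div_pos ha hya
  have hb1 : b ≤ 1 := by rw [div_le_one hya]; linarith
  set D := 1 - ∑ j ∈ univ.erase i, θ j * u j with hD
  have hsum_erase : ∑ j ∈ univ.erase i, θ j * ρ j = m - a := by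
    have := Finset.sum_erase_add univ (fun j => θ j * ρ j) (mem_univ i)
    linarith [this]
  have hDge : (y + a) / x ≤ D := by
    have h1 : ∑ j ∈ univ.erase i, θ j * u j ≤ ∑ j ∈ univ.erase i, θ j * (ρ j / x) :=
      Finset.sum_le_sum fun j _ =>
        mul_le_mul_of_nonneg_left (min_le_right _ _) (hθ j).le
    have h2 : ∑ j ∈ univ.erase i, θ j * (ρ j / x) = (m - a) / x := by
      rw [← hsum_erase, Finset.sum_div]
      exact Finset.sum_congr rfl fun j _ => by ring
    have hle' : (∑ j ∈ univ.erase i, θ j * u j) * x ≤ m - a :=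
      (le_div_iff₀ hx).mp (le_trans h1 (le_of_eq h2))
    rw [div_le_iff₀ hx]
    have hDx : D * x = x - (∑ j ∈ univ.erase i, θ j * u j) * x := by rw [hD]; ring
    linarith [hle', hDx, hxdef]
  have hD0 : 0 < D := lt_of_lt_of_le (div_pos hya hx) hDge
  have hstep1 : θ i * u i ≤ b * D := by
    have h1 : θ i * u i ≤ θ i * (ρ i / x) :=
      mul_le_mul_of_nonneg_left (min_le_right _ _) (hθ i).le
    have h2 : θ i * (ρ i / x) = b * ((y + a) / x) := by
      rw [hb, hadef]; field_simp
      exact (mul_div_cancel_right₀ _ (by rw [← hadef]; exact hya.ne')).symm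
    have h3 : b * ((y + a) / x) ≤ b * D := mul_le_mul_of_nonneg_left hDge hb0.le
    exact le_trans (le_of_le_of_eq h1 h2) h3
  have hrw : θ i * (u i) ^ (α i) = (θ i) ^ (1 - α i) * (θ i * u i) ^ (α i) := by
    rw [Real.mul_rpow (hθ i).le (hu0 i).le, ← mul_assoc, ← Real.rpow_add (hθ i)]
    norm_num
  have hmono : (θ i * u i) ^ (α i) ≤ (b * D) ^ (α i) :=
    Real.rpow_le_rpow (mul_nonneg (hθ i).le (hu0 i).le) hstep1 hα0.le
  have hsplit : (b * D) ^ (α i) = b ^ (α i) * D ^ (α i) := Real.mul_rpow hb0.le hD0.le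
  have hAM : (θ i) ^ (1 - α i) * D ^ (α i) ≤ (1 - α i) * θ i + α i * D :=
    amgm2 (hθ i).le hD0.le hα0.le hα1
  have hθerase : ∑ j ∈ univ.erase i, θ j = 1 - θ i := by
    have := Finset.sum_erase_add univ θ (mem_univ i)
    linarith [this]
  have hfinal : (1 - α i) * θ i + α i * D ≤ 1 - ∑ j ∈ univ.erase i, θ j * (u j) ^ (α i) := by
    have hterm : ∀ j ∈ univ.erase i, θ j * (u j) ^ (α i) ≤ θ j * ((1 - α i) + α i * u j) := by
      intro j _
      have h := amgm2 zero_le_one (hu0 j).le hα0.le hα1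
      rw [Real.one_rpow] at h
      have : (u j) ^ (α i) ≤ (1 - α i) + α i * u j := by linarith
      exact mul_le_mul_of_nonneg_left this (hθ j).le
    have hsum : ∑ j ∈ univ.erase i, θ j * (u j) ^ (α i) ≤
        ∑ j ∈ univ.erase i, θ j * ((1 - α i) + α i * u j) := Finset.sum_le_sum hterm
    have hexp : ∑ j ∈ univ.erase i, θ j * ((1 - α i) + α i * u j)
        = (1 - α i) * (1 - θ i) + α i * ∑ j ∈ univ.erase i, θ j * u j := by
      rw [← hθerase, Finset.mul_sum, Finset.mul_sum, ← Finset.sum_add_distrib]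
      exact Finset.sum_congr rfl fun j _ => by ring
    have hDval : D = 1 - ∑ j ∈ univ.erase i, θ j * u j := hD
    rw [hDval]
    linarith [hsum, hexp]
  calc θ i * (u i) ^ (α i) = (θ i) ^ (1 - α i) * (θ i * u i) ^ (α i) := hrw
    _ ≤ (θ i) ^ (1 - α i) * (b * D) ^ (α i) :=
        mul_le_mul_of_nonneg_left hmono (Real.rpow_nonneg (hθ i).le _)
    _ = b ^ (α i) * ((θ i) ^ (1 - α i) * D ^ (α i)) := by rw [hsplit]; ring
    _ ≤ b ^ (α i) * ((1 - α i) * θ i + α i * D) :=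
        mul_le_mul_of_nonneg_left hAM (Real.rpow_nonneg hb0.le _)
    _ ≤ b ^ (α i) * (1 - ∑ j ∈ univ.erase i, θ j * (u j) ^ (α i)) :=
        mul_le_mul_of_nonneg_left hfinal (Real.rpow_nonneg hb0.le _)

private lemma scalar_main {n : ℕ} (θ ρ α : Fin n → ℝ)
    (hθ : ∀ i, 0 < θ i) (hρ : ∀ i, 0 < ρ i)
    (hα : ∀ i, α i ∈ Set.Ioc (0:ℝ) 1) (hθsum : ∑ i, θ i = 1)
    (y : ℝ) (hy : 0 ≤ y) :
    ∏ i, (1 - ((θ i * ρ i) / (y + θ i * ρ i)) ^ (α i)) ≤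
      1 - ∑ i, θ i * (min 1 (ρ i / (y + ∑ j, θ j * ρ j))) ^ (α i) := by
  classical
  rcases Nat.eq_zero_or_pos n with hn0 | hn0
  · subst hn0; simp
  have : Nonempty (Fin n) := ⟨⟨0, hn0⟩⟩
  set m := ∑ j, θ j * ρ j with hm
  have hmpos : 0 < m :=
    Finset.sum_pos (fun j _ => mul_pos (hθ j) (hρ j)) Finset.univ_nonempty
  have hx : 0 < y + m := by positivity
  set u : Fin n → ℝ := fun j => min 1 (ρ j / (y + m)) with hu
  have hu0 : ∀ j, 0 < u j := fun j => lt_min one_pos (div_pos (hρ j) hx)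
  have hu1 : ∀ j, u j ≤ 1 := fun j => min_le_left _ _
  have hb0 : ∀ i, (0:ℝ) ≤ (θ i * ρ i) / (y + θ i * ρ i) := fun i =>
    div_nonneg (mul_nonneg (hθ i).le (hρ i).le)
      (by nlinarith [mul_pos (hθ i) (hρ i)])
  have hb1 : ∀ i, (θ i * ρ i) / (y + θ i * ρ i) ≤ 1 := fun i => by
    have h := mul_pos (hθ i) (hρ i)
    rw [div_le_one (by linarith)]; linarith
  exact tele α (fun i => θ i * (u i) ^ (α i))
    (fun i => ((θ i * ρ i) / (y + θ i * ρ i)) ^ (α i))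
    (fun i j => θ j * (u j) ^ (α i))
    (fun i => Real.rpow_nonneg (hb0 i) _)
    (fun i => Real.rpow_le_one (hb0 i) (hb1 i) (hα i).1.le)
    (fun i => mul_nonneg (hθ i).le (Real.rpow_nonneg (hu0 i).le _))
    (fun i j => mul_nonneg (hθ j).le (Real.rpow_nonneg (hu0 j).le _))
    (fun i j hij =>
      mul_le_mul_of_nonneg_left
        (Real.rpow_le_rpow_of_exponent_ge (hu0 j) (hu1 j) hij) (hθ j).le)
    (fun i => key_ineq θ ρ α hθ hρ hα hθsum y hy i)
    Finset.univ

/-- for independent infinite-mean Pareto risks (possibly with different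
parameters), every weighted average dominates the corresponding Categorical(θ)
mixture in first-order stochastic dominance. -/
theorem pareto_one_basket
    {Ω : Type*} [MeasurableSpace Ω] (P : Measure Ω) [IsProbabilityMeasure P]
    (n : ℕ) (hn : 2 ≤ n)
    (X : Fin n → Ω → ℝ) (hXmeas : ∀ i, Measurable (X i))
    (hIndep : iIndepFun X P)
    (α : Fin n → ℝ) (hα : ∀ i, α i ∈ Set.Ioc (0 : ℝ) 1)
    (ρ : Fin n → ℝ) (hρ : ∀ i, 0 < ρ i)
    (hsurv : ∀ i, ∀ x : ℝ, ρ i ≤ x →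
      P {ω | X i ω > x} = ENNReal.ofReal ((ρ i / x) ^ (α i)))
    (hsurv' : ∀ i, ∀ x : ℝ, x < ρ i → P {ω | X i ω > x} = 1)
    (θ : Fin n → ℝ) (hθ : ∀ i, θ i ∈ Set.Ioo (0 : ℝ) 1) (hθsum : ∑ i, θ i = 1)
    (I : Fin n → Ω → ℝ) (hImeas : ∀ i, Measurable (I i))
    (hIbasis : ∀ ω, ∃ i, I i ω = 1 ∧ ∀ j, j ≠ i → I j ω = 0)
    (hIprob : ∀ i, P {ω | I i ω = 1} = ENNReal.ofReal (θ i))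
    (hIXindep : IndepFun (fun ω i => I i ω) (fun ω i => X i ω) P) :
    (∀ x : ℝ, 0 ≤ x →
      ∑ i, ENNReal.ofReal (θ i) * P {ω | X i ω > x} ≤
        P {ω | ∑ i, θ i * X i ω > x}) ∧
    (∀ x : ℝ, P {ω | ∑ i, I i ω * X i ω > x} ≤ P {ω | ∑ i, θ i * X i ω > x}) := by
  classical
  have hθpos : ∀ i, 0 < θ i := fun i => (hθ i).1
  have i0 : Fin n := ⟨0, by omega⟩
  set m := ∑ j, θ j * ρ j with hm
  have hmpos : 0 < m :=
    Finset.sum_pos (fun j _ => mul_pos (hθpos j) (hρ j)) ⟨i0, Finset.mem_univ i0⟩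
  have hBmeas : ∀ i (t : ℝ), MeasurableSet {ω | X i ω > t} := fun i t =>
    hXmeas i measurableSet_Ioi
  -- each X i is a.s. at least ρ i
  have hnull : ∀ i, P {ω | X i ω < ρ i} = 0 := by
    intro i
    have hle : ∀ t : ℝ, t < ρ i → P {ω | X i ω ≤ t} = 0 := by
      intro t ht
      have hc : {ω | X i ω ≤ t} = {ω | X i ω > t}ᶜ := by
        ext ω; simp [not_lt]
      rw [hc, prob_compl_eq_zero_iff (hBmeas i t)]
      exact hsurv' i t ht
    have hsub : {ω | X i ω < ρ i} ⊆ ⋃ k : ℕ, {ω | X i ω ≤ ρ i - 1 / (k + 1)} := by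
      intro ω hω
      have hω' : X i ω < ρ i := hω
      obtain ⟨k, hk⟩ := exists_nat_one_div_lt (sub_pos.mpr hω')
      exact Set.mem_iUnion.mpr ⟨k, by simp only [Set.mem_setOf_eq]; linarith⟩
    refine measure_mono_null hsub (measure_iUnion_null fun k => hle _ ?_)
    have : (0:ℝ) < 1 / (k + 1) := by positivity
    linarith
  set G : Set Ω := {ω | ∀ i, ρ i ≤ X i ω} with hG
  have hGc : P Gᶜ = 0 := by
    have hsub : Gᶜ ⊆ ⋃ i, {ω | X i ω < ρ i} := by
      intro ω hω
      simp only [hG, Set.mem_compl_iff, Set.mem_setOf_eq, not_forall, not_le] at hω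
      obtain ⟨i, hi⟩ := hω
      exact Set.mem_iUnion.mpr ⟨i, hi⟩
    exact measure_mono_null hsub (measure_iUnion_null hnull)
  have hsum_eraseθρ : ∀ i, ∑ j ∈ Finset.univ.erase i, θ j * ρ j = m - θ i * ρ i := by
    intro i
    have h2 : ∑ j ∈ Finset.univ.erase i, θ j * ρ j + θ i * ρ i = ∑ j, θ j * ρ j :=
      Finset.sum_erase_add _ _ (Finset.mem_univ i)
    linarith
  -- B i ∩ G ⊆ target
  have hBsub : ∀ (x : ℝ) i,
      {ω | X i ω > (x - (m - θ i * ρ i)) / θ i} ∩ G ⊆ {ω | ∑ j, θ j * X j ω > x} := by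
    intro x i ω hω
    obtain ⟨h1, h2⟩ := hω
    simp only [Set.mem_setOf_eq] at h1 ⊢
    have hGω : ∀ j, ρ j ≤ X j ω := h2
    have hsum : ∑ j ∈ Finset.univ.erase i, θ j * ρ j ≤
        ∑ j ∈ Finset.univ.erase i, θ j * X j ω :=
      Finset.sum_le_sum fun j _ => mul_le_mul_of_nonneg_left (hGω j) (hθpos j).le
    have hi : x - (m - θ i * ρ i) < θ i * X i ω := by
      have := (div_lt_iff₀' (hθpos i)).mp h1
      linarith
    have hsplit : ∑ j ∈ Finset.univ.erase i, θ j * X j ω + θ i * X i ω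
        = ∑ j, θ j * X j ω := Finset.sum_erase_add _ _ (Finset.mem_univ i)
    have := hsum_eraseθρ i
    linarith
  have hTmeas : ∀ x : ℝ, MeasurableSet {ω | ∑ i, θ i * X i ω > x} := by
    intro x
    have hmeas : Measurable fun ω => ∑ i, θ i * X i ω :=
      Finset.univ.measurable_sum fun i _ => (measurable_const.mul (hXmeas i))
    exact measurableSet_lt measurable_const hmeas
  have hθsum' : ∑ i, ENNReal.ofReal (θ i) = 1 := by
    rw [← ENNReal.ofReal_sum_of_nonneg (fun i _ => (hθpos i).le), hθsum, ENNReal.ofReal_one]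
  -- part 1
  have main1 : ∀ x : ℝ, 0 ≤ x →
      ∑ i, ENNReal.ofReal (θ i) * P {ω | X i ω > x} ≤ P {ω | ∑ i, θ i * X i ω > x} := by
    intro x hx
    rcases lt_or_ge x m with hxm | hxm
    · -- easy case : x < m
      have hti : (x - (m - θ i0 * ρ i0)) / θ i0 < ρ i0 := by
        rw [div_lt_iff₀ (hθpos i0)]; nlinarith
      have hB1 : P {ω | X i0 ω > (x - (m - θ i0 * ρ i0)) / θ i0} = 1 := hsurv' i0 _ hti
      have hBG : P ({ω | X i0 ω > (x - (m - θ i0 * ρ i0)) / θ i0} ∩ G) = 1 := by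
        rw [measure_inter_conull hGc]; exact hB1
      calc ∑ i, ENNReal.ofReal (θ i) * P {ω | X i ω > x}
          ≤ ∑ i, ENNReal.ofReal (θ i) * 1 :=
            Finset.sum_le_sum fun i _ => mul_le_mul_right prob_le_one _
        _ = 1 := by simpa using hθsum'
        _ = P ({ω | X i0 ω > (x - (m - θ i0 * ρ i0)) / θ i0} ∩ G) := hBG.symm
        _ ≤ P {ω | ∑ i, θ i * X i ω > x} := measure_mono (hBsub x i0)
    · -- main case : m ≤ x
      set y := x - m with hy
      have hy0 : 0 ≤ y := by simp [hy]; linarith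
      have hx0 : 0 < x := lt_of_lt_of_le hmpos hxm
      have hym : y + m = x := by rw [hy]; ring
      set u : Fin n → ℝ := fun j => min 1 (ρ j / x) with hu
      have hu0 : ∀ j, 0 < u j := fun j => lt_min one_pos (div_pos (hρ j) hx0)
      have hu1 : ∀ j, u j ≤ 1 := fun j => min_le_left _ _
      have hPx : ∀ i, P {ω | X i ω > x} = ENNReal.ofReal ((u i) ^ (α i)) := by
        intro i
        rcases le_or_gt (ρ i) x with h | h
        · rw [hsurv i x h]
          congr 1
          rw [hu]; simp only
          rw [min_eq_right ((div_le_one hx0).mpr h)]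
        · rw [hsurv' i x h, hu]; simp only
          rw [min_eq_left ((one_le_div hx0).mpr h.le), Real.one_rpow, ENNReal.ofReal_one]
      have hti_ge : ∀ i, ρ i ≤ (x - (m - θ i * ρ i)) / θ i := by
        intro i
        rw [le_div_iff₀ (hθpos i)]; nlinarith
      set q : Fin n → ℝ := fun i => ((θ i * ρ i) / (y + θ i * ρ i)) ^ (α i) with hqdef
      have hypos : ∀ i, 0 < y + θ i * ρ i := fun i => by
        have := mul_pos (hθpos i) (hρ i); linarith
      have hq0 : ∀ i, 0 ≤ q i := fun i => Real.rpow_nonneg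
        (div_nonneg (mul_nonneg (hθpos i).le (hρ i).le) (hypos i).le) _
      have hq1 : ∀ i, q i ≤ 1 := fun i => Real.rpow_le_one
        (div_nonneg (mul_nonneg (hθpos i).le (hρ i).le) (hypos i).le)
        (by rw [div_le_one (hypos i)]; linarith) (hα i).1.le
      have hPB : ∀ i, P {ω | X i ω > (x - (m - θ i * ρ i)) / θ i} =
          ENNReal.ofReal (q i) := by
        intro i
        rw [hsurv i _ (hti_ge i)]
        congr 1
        have h1 : x - (m - θ i * ρ i) = y + θ i * ρ i := by rw [hy]; ring
        rw [h1, div_div_eq_mul_div, hqdef]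
        simp only
        rw [mul_comm (ρ i) (θ i)]
      -- independence
      have hprod : P (⋂ i, {ω | X i ω ≤ (x - (m - θ i * ρ i)) / θ i}) =
          ∏ i, P {ω | X i ω ≤ (x - (m - θ i * ρ i)) / θ i} :=
        hIndep.meas_iInter fun i => ⟨Set.Iic _, measurableSet_Iic, rfl⟩
      have hPC : ∀ i, P {ω | X i ω ≤ (x - (m - θ i * ρ i)) / θ i} =
          ENNReal.ofReal (1 - q i) := by
        intro i
        have hc : {ω | X i ω ≤ (x - (m - θ i * ρ i)) / θ i} =
            {ω | X i ω > (x - (m - θ i * ρ i)) / θ i}ᶜ := by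
          ext ω; simp [not_lt]
        rw [hc, prob_compl_eq_one_sub (hBmeas i _), hPB i,
          ENNReal.ofReal_sub 1 (hq0 i), ENNReal.ofReal_one]
      have hInter : P (⋂ i, {ω | X i ω ≤ (x - (m - θ i * ρ i)) / θ i}) =
          ENNReal.ofReal (∏ i, (1 - q i)) := by
        rw [hprod, ENNReal.ofReal_prod_of_nonneg (fun i _ => by linarith [hq1 i])]
        exact Finset.prod_congr rfl fun i _ => hPC i
      -- union
      have hUc : (⋃ i, {ω | X i ω > (x - (m - θ i * ρ i)) / θ i}) =
          (⋂ i, {ω | X i ω ≤ (x - (m - θ i * ρ i)) / θ i})ᶜ := by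
        ext ω; simp [not_le]
      have hUmeas : MeasurableSet (⋃ i, {ω | X i ω > (x - (m - θ i * ρ i)) / θ i}) :=
        MeasurableSet.iUnion fun i => hBmeas i _
      have hPU : P (⋃ i, {ω | X i ω > (x - (m - θ i * ρ i)) / θ i}) =
          1 - ENNReal.ofReal (∏ i, (1 - q i)) := by
        have hCmeas : MeasurableSet (⋂ i, {ω | X i ω ≤ (x - (m - θ i * ρ i)) / θ i}) :=
          MeasurableSet.iInter fun i => (hXmeas i) measurableSet_Iic
        rw [hUc, prob_compl_eq_one_sub hCmeas, hInter]
      -- scalar inequality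
      have hscal := scalar_main θ ρ α hθpos hρ hα hθsum y hy0
      rw [hym] at hscal
      -- sums
      set S := ∑ i, θ i * (u i) ^ (α i) with hS
      have hp0 : ∀ i, 0 ≤ θ i * (u i) ^ (α i) := fun i =>
        mul_nonneg (hθpos i).le (Real.rpow_nonneg (hu0 i).le _)
      have hS0 : 0 ≤ S := Finset.sum_nonneg fun i _ => hp0 i
      have hS1 : S ≤ 1 := by
        rw [hS, ← hθsum]
        exact Finset.sum_le_sum fun i _ => by
          have h1 : (u i) ^ (α i) ≤ 1 :=
            Real.rpow_le_one (hu0 i).le (hu1 i) (hα i).1.le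
          nlinarith [hθpos i, h1, Real.rpow_nonneg (hu0 i).le (α i)]
      have hLHS : ∑ i, ENNReal.ofReal (θ i) * P {ω | X i ω > x} = ENNReal.ofReal S := by
        rw [hS, ENNReal.ofReal_sum_of_nonneg (fun i _ => hp0 i)]
        exact Finset.sum_congr rfl fun i _ => by
          rw [hPx i, ← ENNReal.ofReal_mul (hθpos i).le]
      have hofS : ENNReal.ofReal S = 1 - ENNReal.ofReal (1 - S) := by
        have hadd : ENNReal.ofReal S + ENNReal.ofReal (1 - S) = 1 := by
          rw [← ENNReal.ofReal_add hS0 (by linarith)]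
          norm_num
        exact ENNReal.eq_sub_of_add_eq ENNReal.ofReal_ne_top hadd
      have hchain : ENNReal.ofReal S ≤
          P (⋃ i, {ω | X i ω > (x - (m - θ i * ρ i)) / θ i}) := by
        rw [hofS, hPU]
        exact tsub_le_tsub_left (ENNReal.ofReal_le_ofReal hscal) 1
      have hfin : P (⋃ i, {ω | X i ω > (x - (m - θ i * ρ i)) / θ i}) ≤
          P {ω | ∑ i, θ i * X i ω > x} := by
        have h1 : P ((⋃ i, {ω | X i ω > (x - (m - θ i * ρ i)) / θ i}) ∩ G) =
            P (⋃ i, {ω | X i ω > (x - (m - θ i * ρ i)) / θ i}) :=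
          measure_inter_conull hGc
        rw [← h1]
        refine measure_mono ?_
        rw [Set.iUnion_inter]
        exact Set.iUnion_subset fun i => hBsub x i
      rw [hLHS]
      exact le_trans hchain hfin
  refine ⟨main1, ?_⟩
  -- part 2
  intro x
  have hsub2 : {ω | ∑ i, I i ω * X i ω > x} ⊆
      ⋃ i, ({ω | I i ω = 1} ∩ {ω | X i ω > x}) := by
    intro ω hω
    obtain ⟨i, hi1, hi0⟩ := hIbasis ω
    have hsum : ∑ j, I j ω * X j ω = X i ω := by
      rw [Finset.sum_eq_single i (fun j _ hj => by rw [hi0 j hj, zero_mul])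
        (fun h => absurd (Finset.mem_univ i) h), hi1, one_mul]
    simp only [Set.mem_setOf_eq, hsum] at hω
    exact Set.mem_iUnion.mpr ⟨i, ⟨hi1, hω⟩⟩
  have hfact : ∀ i, P ({ω | I i ω = 1} ∩ {ω | X i ω > x}) =
      ENNReal.ofReal (θ i) * P {ω | X i ω > x} := by
    intro i
    have ms1 : MeasurableSet {v : Fin n → ℝ | v i = 1} := by
      show MeasurableSet ((fun v : Fin n → ℝ => v i) ⁻¹' {1})
      exact measurable_pi_apply i (measurableSet_singleton 1)
    have ms2 : MeasurableSet {v : Fin n → ℝ | v i > x} := by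
      show MeasurableSet ((fun v : Fin n → ℝ => v i) ⁻¹' Set.Ioi x)
      exact measurable_pi_apply i measurableSet_Ioi
    have h := hIXindep.measure_inter_preimage_eq_mul _ _ ms1 ms2
    have e1 : (fun ω (j : Fin n) => I j ω) ⁻¹' {v | v i = 1} = {ω | I i ω = 1} := rfl
    have e2 : (fun ω (j : Fin n) => X j ω) ⁻¹' {v | v i > x} = {ω | X i ω > x} := rfl
    rw [e1, e2] at h
    rw [h, hIprob i]
  calc P {ω | ∑ i, I i ω * X i ω > x}
      ≤ ∑ i, P ({ω | I i ω = 1} ∩ {ω | X i ω > x}) :=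
        le_trans (measure_mono hsub2) (measure_iUnion_fintype_le P _)
    _ = ∑ i, ENNReal.ofReal (θ i) * P {ω | X i ω > x} :=
        Finset.sum_congr rfl fun i _ => hfact i
    _ ≤ P {ω | ∑ i, θ i * X i ω > x} := by
      rcases le_or_gt 0 x with hx | hx
      · exact main1 x hx
      · have hPG : P {ω | ∑ i, θ i * X i ω > x} = 1 := by
          have hsub3 : G ⊆ {ω | ∑ i, θ i * X i ω > x} := by
            intro ω hω
            simp only [Set.mem_setOf_eq]
            have : m ≤ ∑ i, θ i * X i ω :=
              Finset.sum_le_sum fun i _ =>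
                mul_le_mul_of_nonneg_left (hω i) (hθpos i).le
            linarith
          have hG1 : P G = 1 := by
            have : MeasurableSet G := by
              have : G = ⋂ i, {ω | ρ i ≤ X i ω} := by ext ω; simp [hG]
              rw [this]
              exact MeasurableSet.iInter fun i => (hXmeas i) measurableSet_Ici
            exact (prob_compl_eq_zero_iff this).mp hGc
          exact le_antisymm prob_le_one (hG1 ▸ measure_mono hsub3)
        rw [hPG]
        calc ∑ i, ENNReal.ofReal (θ i) * P {ω | X i ω > x}
            ≤ ∑ i, ENNReal.ofReal (θ i) * 1 :=
              Finset.sum_le_sum fun i _ => mul_le_mul_right prob_le_one _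
          _ = 1 := by simpa using hθsum'
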